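/- Let P be a reduced labeled oriented tree and let T be a maximal proper sub-LOT of P. If e = [a,c,b] is an edge of P not contained in T whose label c is a vertex of T, then neither the initial vertex a nor the terminal vertex b of e is a vertex of T. -/

import Mathlib

/-- A labeled oriented graph (LOG): each edge `e` has an initial vertex `init e`,
a terminal vertex `term e`, and a label `label e`, which is a vertex.
An edge `e = [x,z,y]` has `init e = x`, `label e = z`, `term e = y`. -/
structure LOG (V E : Type) where
  init : E → V
  label : E → V
  term : E → V

namespace LOG

variable {V E : Type}

/-- The underlying simple graph of a LOG. -/
def graph (G : LOG V E) : SimpleGraph V :=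
  SimpleGraph.fromRel fun a b => ∃ e, G.init e = a ∧ G.term e = b

/-- The underlying unoriented multigraph is a tree: there are no loops, distinct
edges have distinct endpoint pairs, and the underlying simple graph is a tree. -/
def IsTreeGraph (G : LOG V E) : Prop :=
  (∀ e, G.init e ≠ G.term e) ∧
    Function.Injective (fun e => s(G.init e, G.term e)) ∧ G.graph.IsTree

/-- A LOG is injective if each vertex occurs at most once as an edge label. -/
def InjectiveLabels (G : LOG V E) : Prop := Function.Injective G.label

/-- The simple graph induced by a subgraph, given by a vertex set `VS` and an edge set `ES`. -/
def subgraph (G : LOG V E) (VS : Set V) (ES : Set E) : SimpleGraph VS :=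
  SimpleGraph.fromRel fun a b => ∃ e ∈ ES, G.init e = (a : V) ∧ G.term e = (b : V)

/-- A sub-LOT: a connected subgraph containing at least one edge, all of whose
edge labels are vertices of the subgraph. -/
structure IsSubLOT (G : LOG V E) (VS : Set V) (ES : Set E) : Prop where
  edge_nonempty : ES.Nonempty
  init_mem : ∀ e ∈ ES, G.init e ∈ VS
  term_mem : ∀ e ∈ ES, G.term e ∈ VS
  label_mem : ∀ e ∈ ES, G.label e ∈ VS
  connected : (G.subgraph VS ES).Connected

end LOG

namespace LOG

variable {V E : Type}

/-- A proper sub-LOT: a sub-LOT that is not all of `G`. -/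
def IsProperSubLOT (G : LOG V E) (VS : Set V) (ES : Set E) : Prop :=
  G.IsSubLOT VS ES ∧ ¬(VS = Set.univ ∧ ES = Set.univ)

/-- A maximal proper sub-LOT: a proper sub-LOT not properly contained in any
other proper sub-LOT. -/
def IsMaxProperSubLOT (G : LOG V E) (VS : Set V) (ES : Set E) : Prop :=
  G.IsProperSubLOT VS ES ∧
    ∀ VS' ES', G.IsProperSubLOT VS' ES' → VS ⊆ VS' → ES ⊆ ES' → VS = VS' ∧ ES = ES'

end LOG

namespace LOG

variable {V E : Type}

/-- A LOG is compressed if no edge is labeled with one of its own endpoints. -/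
def Compressed (G : LOG V E) : Prop := ∀ e, G.label e ≠ G.init e ∧ G.label e ≠ G.term e

/-- A LOG is boundary reduced if every boundary vertex (vertex of valency one)
occurs as an edge label. -/
def BoundaryReduced (G : LOG V E) : Prop :=
  ∀ v : V, (∃! e, G.init e = v ∨ G.term e = v) → ∃ e, G.label e = v

/-- A LOG is interior reduced if no vertex has two adjacent edges with the same label
that both point away from, or both point towards, that vertex. -/
def InteriorReduced (G : LOG V E) : Prop :=
  ∀ e f, e ≠ f → G.label e = G.label f → G.init e ≠ G.init f ∧ G.term e ≠ G.term f

/-- A LOG is reduced if it is compressed, boundary reduced and interior reduced. -/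
def Reduced (G : LOG V E) : Prop := G.Compressed ∧ G.BoundaryReduced ∧ G.InteriorReduced

end LOG

namespace LOG

variable {V E : Type}

lemma reachable_mono (G : LOG V E) {VS VS' : Set V} {ES ES' : Set E}
    (hV : VS ⊆ VS') (hE : ES ⊆ ES') {x y : V} (hx : x ∈ VS) (hy : y ∈ VS)
    (h : (G.subgraph VS ES).Reachable ⟨x, hx⟩ ⟨y, hy⟩) :
    (G.subgraph VS' ES').Reachable ⟨x, hV hx⟩ ⟨y, hV hy⟩ := by
  refine SimpleGraph.Reachable.map (G := G.subgraph VS ES) (G' := G.subgraph VS' ES')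
    ⟨fun v => ⟨v.1, hV v.2⟩, ?_⟩ h
  intro u v huv
  simp only [subgraph, SimpleGraph.fromRel_adj] at huv ⊢
  refine ⟨fun hEq => huv.1 (Subtype.ext (Subtype.mk_eq_mk.mp hEq)), ?_⟩
  rcases huv.2 with ⟨f, hf, h1, h2⟩ | ⟨f, hf, h1, h2⟩
  · exact Or.inl ⟨f, hE hf, h1, h2⟩
  · exact Or.inr ⟨f, hE hf, h1, h2⟩

lemma init_not_mem (P : LOG V E) (htree : P.IsTreeGraph) (hred : P.Reduced)
    (VS : Set V) (ES : Set E) (hmax : P.IsMaxProperSubLOT VS ES)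
    (e : E) (he : e ∉ ES) (hc : P.label e ∈ VS) : P.init e ∉ VS := by
  intro ha
  obtain ⟨hne, hinj, htreeG⟩ := htree
  set a := P.init e with ha_def
  set b := P.term e with hb_def
  have hab : a ≠ b := hne e
  -- T' = (VS ∪ {b}, ES ∪ {e}) is a sub-LOT
  have hsub : P.IsSubLOT (VS ∪ {b}) (ES ∪ {e}) := by
    refine ⟨⟨e, Or.inr rfl⟩, ?_, ?_, ?_, ?_⟩
    · rintro f (hf | rfl)
      · exact Or.inl (hmax.1.1.init_mem f hf)
      · exact Or.inl ha
    · rintro f (hf | rfl)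
      · exact Or.inl (hmax.1.1.term_mem f hf)
      · exact Or.inr rfl
    · rintro f (hf | rfl)
      · exact Or.inl (hmax.1.1.label_mem f hf)
      · exact Or.inl hc
    · have hconn := hmax.1.1.connected
      have key : ∀ x : ↥(VS ∪ {b}),
          (P.subgraph (VS ∪ {b}) (ES ∪ {e})).Reachable x ⟨a, Or.inl ha⟩ := by
        rintro ⟨x, hx⟩
        rcases hx with hx | hx
        · exact reachable_mono P Set.subset_union_left Set.subset_union_left hx ha
            (hconn.preconnected ⟨x, hx⟩ ⟨a, ha⟩)
        · rw [Set.mem_singleton_iff] at hx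
          subst hx
          apply SimpleGraph.Adj.reachable
          simp only [subgraph, SimpleGraph.fromRel_adj]
          exact ⟨fun h => hab (congrArg Subtype.val h).symm,
            Or.inr ⟨e, Or.inr rfl, rfl, rfl⟩⟩
      rw [SimpleGraph.connected_iff]
      exact ⟨fun x y => (key x).trans (key y).symm, ⟨⟨a, Or.inl ha⟩⟩⟩
  -- T' cannot be proper, so it is everything
  have huniv : VS ∪ {b} = Set.univ ∧ ES ∪ {e} = Set.univ := by
    by_contra h
    have hp : P.IsProperSubLOT (VS ∪ {b}) (ES ∪ {e}) := ⟨hsub, h⟩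
    have := (hmax.2 _ _ hp Set.subset_union_left Set.subset_union_left).2
    apply he
    rw [this]
    exact Or.inr rfl
  have hES : ∀ f, f ≠ e → f ∈ ES := by
    intro f hf
    have hmem : f ∈ ES ∪ {e} := huniv.2 ▸ Set.mem_univ f
    rcases hmem with h | h
    · exact h
    · exact absurd h hf
  by_cases hb : b ∈ VS
  · -- then VS = univ and ES = univ \ {e}: removing a tree edge disconnects
    have hadj : P.graph.Adj a b := by
      simp only [graph, SimpleGraph.fromRel_adj]
      exact ⟨hab, Or.inl ⟨e, rfl, rfl⟩⟩
    have hbridge := (SimpleGraph.isAcyclic_iff_forall_adj_isBridge.mp htreeG.IsAcyclic) hadj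
    have hnr := SimpleGraph.isBridge_iff.mp hbridge
    apply hnr
    refine (hmax.1.1.connected.preconnected ⟨a, ha⟩ ⟨b, hb⟩).map ⟨Subtype.val, ?_⟩
    intro u v huv
    simp only [subgraph, SimpleGraph.fromRel_adj] at huv
    obtain ⟨hne', h'⟩ := huv
    have huv1 : (u : V) ≠ (v : V) := fun h => hne' (Subtype.ext h)
    have hedge : ∃ f ∈ ES, s(P.init f, P.term f) = s((u : V), (v : V)) := by
      rcases h' with ⟨f, hf, h1, h2⟩ | ⟨f, hf, h1, h2⟩
      · exact ⟨f, hf, by rw [h1, h2]⟩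
      · exact ⟨f, hf, by rw [h1, h2]; exact Sym2.eq_swap⟩
    obtain ⟨f, hfES, hfeq⟩ := hedge
    constructor
    · simp only [graph, SimpleGraph.fromRel_adj]
      refine ⟨huv1, ?_⟩
      rcases h' with ⟨g, _, h1, h2⟩ | ⟨g, _, h1, h2⟩
      · exact Or.inl ⟨g, h1, h2⟩
      · exact Or.inr ⟨g, h1, h2⟩
    · simp only [SimpleGraph.fromEdgeSet_adj, Set.mem_singleton_iff]
      rintro ⟨hse, -⟩
      have : s(P.init f, P.term f) = s(P.init e, P.term e) := by
        rw [hfeq, hse]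
      have hfe : f = e := hinj this
      exact he (hfe ▸ hfES)
  · -- then b is a boundary vertex not occurring as a label
    have hbd : ∃! f, P.init f = b ∨ P.term f = b := by
      refine ⟨e, Or.inr rfl, ?_⟩
      intro f hf
      by_contra hfe
      have hfES := hES f hfe
      rcases hf with h | h
      · exact hb (h ▸ hmax.1.1.init_mem f hfES)
      · exact hb (h ▸ hmax.1.1.term_mem f hfES)
    obtain ⟨f, hf⟩ := hred.2.1 b hbd
    by_cases hfe : f = e
    · subst hfe
      exact hb (hf ▸ hc)
    · exact hb (hf ▸ hmax.1.1.label_mem f (hES f hfe))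

/-- The LOG with all edge orientations reversed. -/
def flip (P : LOG V E) : LOG V E := ⟨P.term, P.label, P.init⟩

lemma flip_graph (P : LOG V E) : P.flip.graph = P.graph := by
  ext a b
  simp only [graph, flip, SimpleGraph.fromRel_adj]
  constructor <;> rintro ⟨h1, h2 | h2⟩
  · exact ⟨h1, Or.inr (h2.imp fun f hf => ⟨hf.2, hf.1⟩)⟩
  · exact ⟨h1, Or.inl (h2.imp fun f hf => ⟨hf.2, hf.1⟩)⟩
  · exact ⟨h1, Or.inr (h2.imp fun f hf => ⟨hf.2, hf.1⟩)⟩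
  · exact ⟨h1, Or.inl (h2.imp fun f hf => ⟨hf.2, hf.1⟩)⟩

lemma flip_subgraph (P : LOG V E) (VS : Set V) (ES : Set E) :
    P.flip.subgraph VS ES = P.subgraph VS ES := by
  ext a b
  simp only [subgraph, flip, SimpleGraph.fromRel_adj]
  constructor <;> rintro ⟨h1, h2 | h2⟩
  · exact ⟨h1, Or.inr (h2.imp fun f hf => ⟨hf.1, hf.2.2, hf.2.1⟩)⟩
  · exact ⟨h1, Or.inl (h2.imp fun f hf => ⟨hf.1, hf.2.2, hf.2.1⟩)⟩
  · exact ⟨h1, Or.inr (h2.imp fun f hf => ⟨hf.1, hf.2.2, hf.2.1⟩)⟩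
  · exact ⟨h1, Or.inl (h2.imp fun f hf => ⟨hf.1, hf.2.2, hf.2.1⟩)⟩

lemma flip_isTreeGraph (P : LOG V E) (h : P.IsTreeGraph) : P.flip.IsTreeGraph := by
  obtain ⟨h1, h2, h3⟩ := h
  refine ⟨fun f hh => h1 f hh.symm, ?_, by rwa [flip_graph]⟩
  have heq : (fun f => s(P.flip.init f, P.flip.term f)) =
      (fun f => s(P.init f, P.term f)) := by
    funext f
    exact Sym2.eq_swap
  rw [heq]
  exact h2

lemma flip_isSubLOT (P : LOG V E) {VS : Set V} {ES : Set E} (h : P.IsSubLOT VS ES) :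
    P.flip.IsSubLOT VS ES :=
  ⟨h.edge_nonempty, h.term_mem, h.init_mem, h.label_mem, by
    rw [flip_subgraph]; exact h.connected⟩

lemma flip_isMax (P : LOG V E) {VS : Set V} {ES : Set E}
    (h : P.IsMaxProperSubLOT VS ES) : P.flip.IsMaxProperSubLOT VS ES := by
  obtain ⟨⟨hs, hn⟩, hm⟩ := h
  refine ⟨⟨flip_isSubLOT P hs, hn⟩, ?_⟩
  rintro VS' ES' ⟨hs', hn'⟩ hV hE
  refine hm VS' ES' ⟨⟨hs'.edge_nonempty, hs'.term_mem, hs'.init_mem, hs'.label_mem, ?_⟩, hn'⟩ hV hE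
  rw [← flip_subgraph]
  exact hs'.connected

lemma flip_reduced (P : LOG V E) (h : P.Reduced) : P.flip.Reduced := by
  obtain ⟨hc, hb, hi⟩ := h
  refine ⟨fun f => ⟨(hc f).2, (hc f).1⟩, ?_,
    fun f g hfg hl => ⟨(hi f g hfg hl).2, (hi f g hfg hl).1⟩⟩
  intro v hv
  apply hb v
  obtain ⟨f, hf1, hf2⟩ := hv
  exact ⟨f, hf1.symm, fun g hg => hf2 g hg.symm⟩

end LOG

/-- **Edges attached to a maximal proper sub-LOT of a reduced LOT.**
Let `P` be a reduced labeled oriented tree and let `T = (VS, ES)` be a maximal proper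
sub-LOT of `P`.  If `e = [a,c,b]` is an edge of `P` not contained in `T` whose label `c`
is a vertex of `T`, then neither the initial vertex `a` nor the terminal vertex `b` of
`e` is a vertex of `T`. -/
theorem edge_labeled_in_sublot_disjoint {V E : Type} [Fintype V] [Fintype E]
    (P : LOG V E) (htree : P.IsTreeGraph) (hred : P.Reduced)
    (VS : Set V) (ES : Set E) (hmax : P.IsMaxProperSubLOT VS ES)
    (e : E) (he : e ∉ ES) (hc : P.label e ∈ VS) :
    P.init e ∉ VS ∧ P.term e ∉ VS := by
  refine ⟨LOG.init_not_mem P htree hred VS ES hmax e he hc, ?_⟩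
  exact LOG.init_not_mem P.flip (LOG.flip_isTreeGraph P htree) (LOG.flip_reduced P hred)
    VS ES (LOG.flip_isMax P hmax) e he hc
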